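/- Suppose Ψ: ℝⁿ → ℝ is differentiable, bounded below by Ψ_inf, has L-Lipschitz gradient, and satisfies the Polyak–Łojasiewicz condition 2c(Ψ(θ) - Ψ_inf) ≤ ‖∇Ψ(θ)‖² for some c > 0. If the deterministic iteration θ_{k+1} = θ_k - (B_k + λI)⁻¹∇Ψ(θ_k) is run with B_k symmetric, 0 ⪯ B_k ⪯ hI, and fixed λ ≥ L, then Ψ(θ_k) - Ψ_inf ≤ (1 - c/(h+λ))^k (Ψ(θ₀) - Ψ_inf). -/

import Mathlib

open Matrix

lemma descent_aux {n : ℕ} (Ψ : EuclideanSpace ℝ (Fin n) → ℝ) (L : ℝ)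
    (hΨ : Differentiable ℝ Ψ)
    (hLip : ∀ x y, ‖gradient Ψ x - gradient Ψ y‖ ≤ L * ‖x - y‖)
    (x v : EuclideanSpace ℝ (Fin n)) :
    Ψ (x + v) ≤ Ψ x + inner ℝ (gradient Ψ x) v + L / 2 * ‖v‖ ^ 2 := by
  set C1 : ℝ := inner ℝ (gradient Ψ x) v with hC1
  set C2 : ℝ := L / 2 * ‖v‖ ^ 2 with hC2
  set φ : ℝ → ℝ := fun t => Ψ (x + t • v) - t * C1 - C2 * t ^ 2 with hφ
  have hline : ∀ t : ℝ, HasDerivAt (fun s : ℝ => x + s • v) v t := fun t => by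
    simpa using ((hasDerivAt_id t).smul_const v).const_add x
  have hderiv : ∀ t : ℝ, HasDerivAt φ
      ((inner ℝ (gradient Ψ (x + t • v)) v : ℝ) - C1 - C2 * (2 * t)) t := by
    intro t
    have h1 : HasDerivAt (fun s : ℝ => Ψ (x + s • v))
        ((inner ℝ (gradient Ψ (x + t • v)) v : ℝ)) t := by
      have := ((hΨ (x + t • v)).hasGradientAt.hasFDerivAt).comp_hasDerivAt t (hline t)
      exact this
    have h2 : HasDerivAt (fun s : ℝ => s * C1) C1 t := by
      simpa using (hasDerivAt_id t).mul_const C1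
    have h3 : HasDerivAt (fun s : ℝ => C2 * s ^ 2) (C2 * (2 * t)) t := by
      simpa using (hasDerivAt_pow 2 t).const_mul C2
    exact (h1.sub h2).sub h3
  have hanti : AntitoneOn φ (Set.Icc 0 1) := by
    apply antitoneOn_of_deriv_nonpos (convex_Icc 0 1)
    · exact fun t _ => ((hderiv t).differentiableAt).continuousAt.continuousWithinAt
    · exact fun t _ => ((hderiv t).differentiableAt).differentiableWithinAt
    · intro t ht
      rw [interior_Icc] at ht
      rw [(hderiv t).deriv]
      have hsub : (inner ℝ (gradient Ψ (x + t • v)) v : ℝ) - C1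
          = (inner ℝ (gradient Ψ (x + t • v) - gradient Ψ x) v : ℝ) := by
        rw [inner_sub_left]
      have hbd : (inner ℝ (gradient Ψ (x + t • v) - gradient Ψ x) v : ℝ)
          ≤ L * t * ‖v‖ ^ 2 := by
        calc (inner ℝ (gradient Ψ (x + t • v) - gradient Ψ x) v : ℝ)
            ≤ ‖gradient Ψ (x + t • v) - gradient Ψ x‖ * ‖v‖ := real_inner_le_norm _ _
          _ ≤ (L * ‖(x + t • v) - x‖) * ‖v‖ := by
              apply mul_le_mul_of_nonneg_right (hLip _ _) (norm_nonneg _)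
          _ = L * t * ‖v‖ ^ 2 := by
              rw [add_sub_cancel_left, norm_smul, Real.norm_eq_abs, abs_of_nonneg ht.1.le]
              ring
      rw [hsub]
      have hC2' : C2 * (2 * t) = L * t * ‖v‖ ^ 2 := by rw [hC2]; ring
      linarith
  have h01 := hanti (Set.left_mem_Icc.2 zero_le_one) (Set.right_mem_Icc.2 zero_le_one) zero_le_one
  simp only [hφ, zero_smul, add_zero, one_smul, zero_mul, sub_zero, one_pow, mul_one,
    zero_pow, mul_zero] at h01
  linarith

section aux


lemma psd_conj {n : ℕ} {C s : Matrix (Fin n) (Fin n) ℝ} (hC : C.PosSemidef)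
    (hs : sᵀ = s) (w : Fin n → ℝ) : 0 ≤ w ⬝ᵥ ((s * C * s) *ᵥ w) := by
  have h1 : (s * C * s) *ᵥ w = s *ᵥ (C *ᵥ (s *ᵥ w)) := by
    rw [← mulVec_mulVec, ← mulVec_mulVec]
  rw [h1, dotProduct_mulVec, ← mulVec_transpose, hs]
  have := hC.dotProduct_mulVec_nonneg (s *ᵥ w)
  rwa [star_trivial] at this

lemma inner_eq_dot {n : ℕ} (a b : EuclideanSpace ℝ (Fin n)) :
    (inner ℝ a b : ℝ) = (WithLp.equiv 2 (Fin n → ℝ) a) ⬝ᵥ (WithLp.equiv 2 (Fin n → ℝ) b) := by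
  simp [PiLp.inner_apply, dotProduct, RCLike.inner_apply, mul_comm]

end aux

open scoped MatrixOrder in
lemma step_aux {n : ℕ} (h lam L c Ψinf : ℝ) (Ψ : EuclideanSpace ℝ (Fin n) → ℝ)
    (hΨ : Differentiable ℝ Ψ)
    (hbound : ∀ θ, Ψinf ≤ Ψ θ)
    (hLip : ∀ x y, ‖gradient Ψ x - gradient Ψ y‖ ≤ L * ‖x - y‖)
    (hc : 0 < c)
    (hPL : ∀ θ, 2 * c * (Ψ θ - Ψinf) ≤ ‖gradient Ψ θ‖ ^ 2)
    (hh : 0 ≤ h) (hlamL : L ≤ lam) (hlam : 0 < lam)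
    (Bm : Matrix (Fin n) (Fin n) ℝ)
    (hBsym : Bm.IsSymm) (hB0 : Bm.PosSemidef)
    (hBh : (h • (1 : Matrix (Fin n) (Fin n) ℝ) - Bm).PosSemidef)
    (x y : EuclideanSpace ℝ (Fin n))
    (hup : y = x - Matrix.toEuclideanLin (Bm + lam • (1 : Matrix (Fin n) (Fin n) ℝ))⁻¹
        (gradient Ψ x))
    (hdescent : ∀ x v : EuclideanSpace ℝ (Fin n),
      Ψ (x + v) ≤ Ψ x + inner ℝ (gradient Ψ x) v + L / 2 * ‖v‖ ^ 2) :
    Ψ y - Ψinf ≤ (1 - c / (h + lam)) * (Ψ x - Ψinf) := by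
  have hplus : 0 < h + lam := by linarith
  set M : Matrix (Fin n) (Fin n) ℝ := Bm + lam • 1 with hMdef
  have hMsym : Mᵀ = M := by
    rw [hMdef, transpose_add, hBsym.eq, transpose_smul, transpose_one]
  have hMpd : M.PosDef := by
    refine Matrix.PosDef.posSemidef_add hB0 ?_
    rw [smul_one_eq_diagonal]
    exact Matrix.PosDef.diagonal fun _ => hlam
  set g : EuclideanSpace ℝ (Fin n) := gradient Ψ x with hgdef
  set g' : Fin n → ℝ := WithLp.equiv 2 (Fin n → ℝ) g with hg'def
  set v' : Fin n → ℝ := M⁻¹ *ᵥ g' with hv'def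
  set w : EuclideanSpace ℝ (Fin n) := Matrix.toEuclideanLin M⁻¹ g with hwdef
  have hw' : WithLp.equiv 2 (Fin n → ℝ) w = v' := by
    rw [hwdef]; rfl
  have hMg : M *ᵥ v' = g' := by
    rw [hv'def, mulVec_mulVec, Matrix.mul_nonsing_inv _
      ((Matrix.isUnit_iff_isUnit_det M).mp hMpd.isUnit), one_mulVec]
  -- quadratic form facts
  set Q : ℝ := v' ⬝ᵥ (M *ᵥ v') with hQdef
  set S : ℝ := v' ⬝ᵥ v' with hSdef
  set G : ℝ := g' ⬝ᵥ g' with hGdef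
  have hS : 0 ≤ S := by
    rw [hSdef, dotProduct]
    exact Finset.sum_nonneg fun i _ => mul_self_nonneg _
  have f1 : lam * S ≤ Q := by
    have hB := hB0.dotProduct_mulVec_nonneg v'
    rw [star_trivial] at hB
    have hexp : Q = v' ⬝ᵥ (Bm *ᵥ v') + lam * S := by
      rw [hQdef, hMdef, add_mulVec, dotProduct_add, smul_mulVec, one_mulVec,
        dotProduct_smul, smul_eq_mul, hSdef]
    linarith
  have key0 : 0 ≤ v' ⬝ᵥ ((M * (h • 1 - Bm)) *ᵥ v') := by
    have hsplit : M * (h • (1 : Matrix (Fin n) (Fin n) ℝ) - Bm)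
        = Bm * (h • 1 - Bm) + lam • (h • 1 - Bm) := by
      rw [hMdef, add_mul, Matrix.smul_mul, one_mul]
    set s : Matrix (Fin n) (Fin n) ℝ := CFC.sqrt Bm with hsdef
    have hss : s * s = Bm := CFC.sqrt_mul_sqrt_self Bm hB0.nonneg
    have hssym : sᵀ = s := by
      have := (CFC.sqrt_nonneg Bm).isSelfAdjoint.star_eq
      rwa [star_eq_conjTranspose, conjTranspose_eq_transpose_of_trivial] at this
    have hcomm : s * Bm = Bm * s := by rw [← hss, mul_assoc]
    have hcommC : s * (h • (1 : Matrix (Fin n) (Fin n) ℝ) - Bm)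
        = (h • 1 - Bm) * s := by
      rw [mul_sub, sub_mul, Matrix.mul_smul, Matrix.smul_mul, mul_one, one_mul, hcomm]
    have hBC : s * (h • (1 : Matrix (Fin n) (Fin n) ℝ) - Bm) * s
        = Bm * (h • 1 - Bm) := by
      rw [mul_assoc, ← hcommC, ← mul_assoc, hss]
    have term1 : 0 ≤ v' ⬝ᵥ ((Bm * (h • (1 : Matrix (Fin n) (Fin n) ℝ) - Bm)) *ᵥ v') := by
      rw [← hBC]; exact psd_conj hBh hssym v'
    have term2 : 0 ≤ v' ⬝ᵥ ((lam • (h • (1 : Matrix (Fin n) (Fin n) ℝ) - Bm)) *ᵥ v') := by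
      rw [smul_mulVec, dotProduct_smul, smul_eq_mul]
      have := hBh.dotProduct_mulVec_nonneg v'
      rw [star_trivial] at this
      positivity
    rw [hsplit, add_mulVec, dotProduct_add]
    linarith
  have f2 : G ≤ (h + lam) * Q := by
    have hone : (h + lam) • (1 : Matrix (Fin n) (Fin n) ℝ) - M = h • 1 - Bm := by
      rw [hMdef, add_smul]; abel
    have hexp : M * (h • (1 : Matrix (Fin n) (Fin n) ℝ) - Bm)
        = (h + lam) • M - M * M := by
      rw [← hone, mul_sub, Matrix.mul_smul, mul_one]
    have hGQ : G = v' ⬝ᵥ ((M * M) *ᵥ v') := by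
      rw [hGdef, ← hMg, ← mulVec_mulVec, dotProduct_mulVec, ← mulVec_transpose, hMsym,
        mulVec_mulVec]
      exact dotProduct_comm _ _
    have key1 := key0
    rw [hexp, sub_mulVec, dotProduct_sub, smul_mulVec, dotProduct_smul, smul_eq_mul]
      at key1
    rw [hGQ]
    linarith
  -- inner products
  have hiQ : (inner ℝ g w : ℝ) = Q := by
    rw [inner_eq_dot, hw', ← hg'def, ← hMg, dotProduct_comm, hQdef]
  have hnw : ‖w‖ ^ 2 = S := by
    rw [← real_inner_self_eq_norm_sq, inner_eq_dot, hw', hSdef]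
  have hng : ‖g‖ ^ 2 = G := by
    rw [← real_inner_self_eq_norm_sq, inner_eq_dot, ← hg'def, hGdef]
  -- descent
  have hdes := hdescent x (-w)
  rw [← sub_eq_add_neg, ← hup, inner_neg_right, norm_neg, ← hgdef, hiQ, hnw] at hdes
  -- combine
  have hPLx := hPL x
  rw [← hgdef, hng] at hPLx
  have hd0 : 0 ≤ Ψ x - Ψinf := sub_nonneg.2 (hbound x)
  have h1 : Ψ y - Ψinf ≤ (Ψ x - Ψinf) - Q / 2 := by
    have hprod : 0 ≤ (lam - L) * S := mul_nonneg (by linarith) hS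
    nlinarith
  have h4 := mul_le_mul_of_nonneg_right h1 hplus.le
  have hfinal : (Ψ y - Ψinf) * (h + lam) ≤ ((h + lam) - c) * (Ψ x - Ψinf) := by
    nlinarith
  have heq : (1 - c / (h + lam)) * (Ψ x - Ψinf)
      = (((h + lam) - c) * (Ψ x - Ψinf)) / (h + lam) := by
    field_simp
  rw [heq, le_div_iff₀ hplus]
  exact hfinal

theorem pl_linear_convergence (n : ℕ)
    (Ψ : EuclideanSpace ℝ (Fin n) → ℝ) (Ψinf L c h lam : ℝ)
    (hΨ : Differentiable ℝ Ψ)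
    (hbound : ∀ θ, Ψinf ≤ Ψ θ)
    (hLip : ∀ x y, ‖gradient Ψ x - gradient Ψ y‖ ≤ L * ‖x - y‖)
    (hc : 0 < c)
    (hPL : ∀ θ, 2 * c * (Ψ θ - Ψinf) ≤ ‖gradient Ψ θ‖ ^ 2)
    (hh : 0 ≤ h) (hlamL : L ≤ lam) (hlam : 0 < lam)
    (B : ℕ → Matrix (Fin n) (Fin n) ℝ)
    (hBsym : ∀ k, (B k).IsSymm)
    (hB0 : ∀ k, (B k).PosSemidef)
    (hBh : ∀ k, (h • (1 : Matrix (Fin n) (Fin n) ℝ) - B k).PosSemidef)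
    (θ : ℕ → EuclideanSpace ℝ (Fin n))
    (hupd : ∀ k, θ (k + 1) = θ k -
      Matrix.toEuclideanLin (B k + lam • (1 : Matrix (Fin n) (Fin n) ℝ))⁻¹
        (gradient Ψ (θ k))) :
    ∀ k, Ψ (θ k) - Ψinf ≤ (1 - c / (h + lam)) ^ k * (Ψ (θ 0) - Ψinf) := by
  have step : ∀ k, Ψ (θ (k + 1)) - Ψinf ≤ (1 - c / (h + lam)) * (Ψ (θ k) - Ψinf) :=
    fun k => step_aux h lam L c Ψinf Ψ hΨ hbound hLip hc hPL hh hlamL hlam (B k)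
      (hBsym k) (hB0 k) (hBh k) (θ k) (θ (k + 1)) (hupd k)
      (descent_aux Ψ L hΨ hLip)
  have hnonneg : ∀ k, 0 ≤ Ψ (θ k) - Ψinf := fun k => sub_nonneg.2 (hbound _)
  by_cases hr : 0 ≤ 1 - c / (h + lam)
  · intro k
    induction k with
    | zero => simp
    | succ k ih =>
      calc Ψ (θ (k + 1)) - Ψinf ≤ (1 - c / (h + lam)) * (Ψ (θ k) - Ψinf) := step k
        _ ≤ (1 - c / (h + lam)) * ((1 - c / (h + lam)) ^ k * (Ψ (θ 0) - Ψinf)) :=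
            mul_le_mul_of_nonneg_left ih hr
        _ = (1 - c / (h + lam)) ^ (k + 1) * (Ψ (θ 0) - Ψinf) := by ring
  · push_neg at hr
    have hzero : ∀ k, Ψ (θ k) - Ψinf = 0 := by
      intro k
      refine le_antisymm ?_ (hnonneg k)
      nlinarith [step k, hnonneg (k + 1), hnonneg k]
    intro k
    rw [hzero k, hzero 0, mul_zero]
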